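/- Let n ≥ 1, let t0 ≤ tf be reals, let f : ℝ × ℝⁿ → ℝⁿ be continuous, and let V : ℝ × ℝⁿ → ℝ be continuously differentiable with V(t,x) ≥ 0 for all (t,x) ∈ [t0,tf] × ℝⁿ. Assume that for every t ∈ [t0,tf] and every x ∈ ℝⁿ with V(t,x) = 1 one has ∂V/∂t(t,x) + ⟨∇ₓV(t,x), f(t,x)⟩ < 0. Then for every τ ∈ [t0,tf] and every differentiable curve x : [τ,tf] → ℝⁿ satisfying x′(t) = f(t,x(t)) for all t ∈ [τ,tf] and V(τ,x(τ)) ≤ 1, one has V(t,x(t)) ≤ 1 for all t ∈ [τ,tf]. -/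

import Mathlib

open Set

/-- Lemma 1 of the paper (invariance part): if the time-varying Lyapunov function `V`
decreases strictly along the vector field on its unit level set for every time in
`[t0, tf]`, then the sublevel sets `Ω_t = {x | V (t, x) ≤ 1}` form a funnel: any
solution of `ẋ = f(t, x)` starting inside `Ω_τ` at a time `τ ∈ [t0, tf]` stays
inside `Ω_t` for all `t ∈ [τ, tf]`. -/
theorem funnel_invariance
    (n : ℕ) (hn : 1 ≤ n) (t0 tf : ℝ) (ht : t0 ≤ tf)
    (f : ℝ × EuclideanSpace ℝ (Fin n) → EuclideanSpace ℝ (Fin n))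
    (hf : Continuous f)
    (V : ℝ × EuclideanSpace ℝ (Fin n) → ℝ)
    (hV : ContDiff ℝ 1 V)
    (hVnonneg : ∀ t ∈ Icc t0 tf, ∀ x : EuclideanSpace ℝ (Fin n), 0 ≤ V (t, x))
    (hdec : ∀ t ∈ Icc t0 tf, ∀ x : EuclideanSpace ℝ (Fin n), V (t, x) = 1 →
      deriv (fun s => V (s, x)) t
        + fderiv ℝ (fun y => V (t, y)) x (f (t, x)) < 0)
    (τ : ℝ) (hτ : τ ∈ Icc t0 tf)
    (x : ℝ → EuclideanSpace ℝ (Fin n))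
    (hx : ∀ t ∈ Icc τ tf, HasDerivWithinAt x (f (t, x t)) (Icc τ tf) t)
    (hinit : V (τ, x τ) ≤ 1) :
    ∀ t ∈ Icc τ tf, V (t, x t) ≤ 1 := by
  set g : ℝ → ℝ := fun t => V (t, x t) with hg_def
  -- derivative of g along the solution
  have hVd : Differentiable ℝ V := hV.differentiable one_ne_zero
  have hgderiv : ∀ t ∈ Icc τ tf,
      HasDerivWithinAt g (fderiv ℝ V (t, x t) (1, f (t, x t))) (Icc τ tf) t := by
    intro t htt
    have hcurve : HasDerivWithinAt (fun s => (s, x s)) ((1 : ℝ), f (t, x t)) (Icc τ tf) t :=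
      (hasDerivWithinAt_id t _).prodMk (hx t htt)
    exact (hVd (t, x t)).hasFDerivAt.comp_hasDerivWithinAt t hcurve
  -- rewrite the decrease hypothesis in terms of the total derivative
  have hdec' : ∀ t ∈ Icc t0 tf, ∀ y : EuclideanSpace ℝ (Fin n), V (t, y) = 1 →
      fderiv ℝ V (t, y) (1, f (t, y)) < 0 := by
    intro t htt y hy
    have hD := (hVd (t, y)).hasFDerivAt
    have h1 : HasDerivAt (fun s => V (s, y)) (fderiv ℝ V (t, y) (1, 0)) t := by
      have hc : HasDerivAt (fun s => ((s : ℝ), y)) ((1 : ℝ), (0 : EuclideanSpace ℝ (Fin n))) t :=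
        (hasDerivAt_id t).prodMk (hasDerivAt_const t y)
      exact hD.comp_hasDerivAt t hc
    have h2 : HasFDerivAt (fun z => V (t, z))
        ((fderiv ℝ V (t, y)).comp (ContinuousLinearMap.inr ℝ ℝ (EuclideanSpace ℝ (Fin n)))) y := by
      exact hD.comp y (hasFDerivAt_prodMk_right t y)
    have := hdec t htt y hy
    rw [h1.deriv, h2.fderiv] at this
    have heq : fderiv ℝ V (t, y) (1, f (t, y))
        = fderiv ℝ V (t, y) (1, 0) + fderiv ℝ V (t, y) (0, f (t, y)) := by
      rw [← map_add]
      norm_num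
    rw [heq]
    simpa using this
  by_contra hcon
  push_neg at hcon
  obtain ⟨t1, ht1, hgt1⟩ := hcon
  have hτt1 : τ ≤ t1 := ht1.1
  have ht1tf : t1 ≤ tf := ht1.2
  set S : Set ℝ := {t | t ∈ Icc τ t1 ∧ g t ≤ 1} with hS_def
  have hSne : S.Nonempty := ⟨τ, ⟨le_refl τ, hτt1⟩, hinit⟩
  have hSbdd : BddAbove S := ⟨t1, fun t htS => htS.1.2⟩
  set s := sSup S with hs_def
  have hsmem : τ ≤ s ∧ s ≤ t1 :=
    ⟨le_csSup hSbdd ⟨⟨le_refl τ, hτt1⟩, hinit⟩, csSup_le hSne fun t htS => htS.1.2⟩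
  have hsIcc : s ∈ Icc τ tf := ⟨hsmem.1, hsmem.2.trans ht1tf⟩
  have hgcont : ContinuousOn g (Icc τ tf) := fun t htt =>
    (hgderiv t htt).continuousWithinAt
  -- g s ≤ 1
  have hSsub : S ⊆ Icc τ tf := fun t htS => ⟨htS.1.1, htS.1.2.trans ht1tf⟩
  have hscl : s ∈ closure S := by
    exact csSup_mem_closure hSne hSbdd
  have hgs_le : g s ≤ 1 := by
    have hcw : ContinuousWithinAt g S s :=
      ((hgcont s hsIcc).mono hSsub)
    have hne : (nhdsWithin s S).NeBot := mem_closure_iff_nhdsWithin_neBot.mp hscl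
    exact le_of_tendsto hcw (Filter.eventually_of_mem self_mem_nhdsWithin fun t htS => htS.2)
  have hst1 : s < t1 := lt_of_le_of_ne hsmem.2 (fun h => by
    rw [h] at hgs_le; exact absurd hgs_le (not_le.mpr hgt1))
  -- after s, g > 1
  have habove : ∀ t, s < t → t ≤ t1 → 1 < g t := by
    intro t hst htt1
    by_contra hle
    push_neg at hle
    have : t ∈ S := ⟨⟨hsmem.1.trans hst.le, htt1⟩, hle⟩
    exact absurd (le_csSup hSbdd this) (not_le.mpr hst)
  -- g s = 1
  have hgs : g s = 1 := by
    rcases lt_or_eq_of_le hgs_le with hlt | heq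
    · exfalso
      have hsub : Ioc s t1 ⊆ Icc τ tf := fun t htt =>
        ⟨hsmem.1.trans htt.1.le, htt.2.trans ht1tf⟩
      have hcw : ContinuousWithinAt g (Ioc s t1) s := (hgcont s hsIcc).mono hsub
      have hne : (nhdsWithin s (Ioc s t1)).NeBot := left_nhdsWithin_Ioc_neBot hst1
      have hev : ∀ᶠ t in nhdsWithin s (Ioc s t1), g t < 1 :=
        hcw.eventually_lt_const hlt
      obtain ⟨t, hglt, htIoc⟩ := (hev.and self_mem_nhdsWithin).exists
      exact absurd (habove t htIoc.1 htIoc.2) (not_lt.mpr hglt.le)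
    · exact heq
  -- derivative at s is negative
  have hs_t0tf : s ∈ Icc t0 tf := ⟨hτ.1.trans hsmem.1, hsIcc.2⟩
  have hdneg : fderiv ℝ V (s, x s) (1, f (s, x s)) < 0 := hdec' s hs_t0tf (x s) hgs
  -- but the slope after s is nonnegative: contradiction
  have hderivS : HasDerivWithinAt g (fderiv ℝ V (s, x s) (1, f (s, x s))) (Ioc s t1) s :=
    (hgderiv s hsIcc).mono (fun t htt => ⟨hsmem.1.trans htt.1.le, htt.2.trans ht1tf⟩)
  have hslope : Filter.Tendsto (slope g s) (nhdsWithin s (Ioc s t1 \ {s}))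
      (nhds (fderiv ℝ V (s, x s) (1, f (s, x s)))) :=
    hasDerivWithinAt_iff_tendsto_slope.mp hderivS
  have hsetEq : Ioc s t1 \ {s} = Ioc s t1 :=
    Set.diff_singleton_eq_self (by simp)
  rw [hsetEq] at hslope
  have hne : (nhdsWithin s (Ioc s t1)).NeBot := left_nhdsWithin_Ioc_neBot hst1
  have hnonneg : 0 ≤ fderiv ℝ V (s, x s) (1, f (s, x s)) := by
    refine ge_of_tendsto hslope ?_
    refine Filter.eventually_of_mem self_mem_nhdsWithin fun t htt => ?_
    have h1 : 1 < g t := habove t htt.1 htt.2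
    have : 0 < g t - g s := by rw [hgs]; linarith
    have hpos : 0 < t - s := sub_pos.mpr htt.1
    rw [slope_def_field]
    rw [div_eq_mul_inv] at *
    positivity
  exact absurd hdneg (not_lt.mpr hnonneg)
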